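/- Every noncrossing partition of {1,...,2k} all of whose blocks have even size is balanced: in each block the number of odd elements equals the number of even elements. -/

import Mathlib

/-- `P` is a partition of `Fin m`. -/
def IsPartition {m : ℕ} (P : Finset (Finset (Fin m))) : Prop :=
  (∀ B ∈ P, B.Nonempty) ∧ ∀ x : Fin m, ∃! B, B ∈ P ∧ x ∈ B

/-- A partition is noncrossing if whenever `a < b < c < d` with `a, c` in one
block and `b, d` in another block, the two blocks coincide. -/
def Noncrossing {m : ℕ} (P : Finset (Finset (Fin m))) : Prop :=
  ∀ a b c d : Fin m, a < b → b < c → c < d →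
    ∀ B ∈ P, ∀ B' ∈ P, a ∈ B → c ∈ B → b ∈ B' → d ∈ B' → B = B'

lemma partition_blocks_eq {m : ℕ} {P : Finset (Finset (Fin m))} (hP : IsPartition P)
    {B B' : Finset (Fin m)} (hB : B ∈ P) (hB' : B' ∈ P) {x : Fin m}
    (hxB : x ∈ B) (hxB' : x ∈ B') : B = B' := by
  obtain ⟨C, _, hC⟩ := hP.2 x
  exact (hC B ⟨hB, hxB⟩).trans (hC B' ⟨hB', hxB'⟩).symm

/-- A finset of even cardinality whose consecutive elements alternate parity
has as many even elements as odd elements. -/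
lemma alt_parity_balanced {m : ℕ} : ∀ n : ℕ, ∀ S : Finset (Fin m), S.card = n → Even n →
    (∀ u ∈ S, ∀ v ∈ S, u < v → (∀ w ∈ S, ¬(u < w ∧ w < v)) → u.val % 2 ≠ v.val % 2) →
    (S.filter (fun x => x.val % 2 = 0)).card = (S.filter (fun x => x.val % 2 = 1)).card := by
  intro n
  induction n using Nat.strong_induction_on with
  | _ n ih =>
    intro S hcard hev halt
    rcases Nat.eq_zero_or_pos n with h0 | hpos
    · subst h0
      rw [Finset.card_eq_zero] at hcard
      subst hcard
      simp
    · have hn2 : 2 ≤ n := by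
        rcases hev with ⟨r, hr⟩; omega
      have hS : S.Nonempty := Finset.card_pos.mp (hcard ▸ hpos)
      obtain ⟨u, hu⟩ : ∃ u, u = S.min' hS := ⟨_, rfl⟩
      have huS : u ∈ S := hu ▸ S.min'_mem hS
      have hS' : (S.erase u).Nonempty := by
        rw [← Finset.card_pos, Finset.card_erase_of_mem huS, hcard]
        omega
      obtain ⟨v, hv⟩ : ∃ v, v = (S.erase u).min' hS' := ⟨_, rfl⟩
      have hvS' : v ∈ S.erase u := hv ▸ (S.erase u).min'_mem hS'
      have hvS : v ∈ S := Finset.mem_of_mem_erase hvS'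
      have hvu : v ≠ u := Finset.ne_of_mem_erase hvS'
      have huv : u < v := lt_of_le_of_ne (hu ▸ S.min'_le v hvS) (Ne.symm hvu)
      set T := (S.erase u).erase v with hT
      have hTsub : T ⊆ S := fun x hx =>
        Finset.mem_of_mem_erase (Finset.mem_of_mem_erase hx)
      have hvleT : ∀ x ∈ T, v < x := by
        intro x hx
        have hx' : x ∈ S.erase u := Finset.mem_of_mem_erase hx
        exact lt_of_le_of_ne (hv ▸ (S.erase u).min'_le x hx')
          (Ne.symm (Finset.ne_of_mem_erase hx))
      have hcons : ∀ w ∈ S, ¬(u < w ∧ w < v) := by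
        rintro w hw ⟨h1, h2⟩
        have : w ∈ S.erase u := Finset.mem_erase.mpr ⟨Fin.ne_of_gt h1, hw⟩
        exact absurd (hv ▸ (S.erase u).min'_le w this) (not_le.mpr h2)
      have hpar : u.val % 2 ≠ v.val % 2 := halt u huS v hvS huv hcons
      have haltT : ∀ a ∈ T, ∀ b ∈ T, a < b → (∀ w ∈ T, ¬(a < w ∧ w < b)) →
          a.val % 2 ≠ b.val % 2 := by
        intro a ha b hb hab hcT
        refine halt a (hTsub ha) b (hTsub hb) hab ?_
        rintro w hw ⟨h1, h2⟩
        have hwu : w ≠ u := Fin.ne_of_gt (lt_trans (lt_trans huv (hvleT a ha)) h1)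
        have hwv : w ≠ v := Fin.ne_of_gt (lt_trans (hvleT a ha) h1)
        exact hcT w (Finset.mem_erase.mpr ⟨hwv, Finset.mem_erase.mpr ⟨hwu, hw⟩⟩) ⟨h1, h2⟩
      have hcardT : T.card = n - 2 := by
        rw [hT, Finset.card_erase_of_mem hvS', Finset.card_erase_of_mem huS, hcard]
        omega
      have hevT : Even (n - 2) := by
        rcases hev with ⟨r, hr⟩
        exact ⟨r - 1, by omega⟩
      have ihT := ih (n - 2) (by omega) T hcardT hevT haltT
      have hSdecomp : S = insert u (insert v T) := by
        ext x
        simp only [Finset.mem_insert, hT, Finset.mem_erase]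
        constructor
        · intro hx
          by_cases h1 : x = u
          · exact Or.inl h1
          by_cases h2 : x = v
          · exact Or.inr (Or.inl h2)
          · exact Or.inr (Or.inr ⟨h2, h1, hx⟩)
        · rintro (h | h | ⟨_, _, hx⟩)
          · rw [h]; exact huS
          · rw [h]; exact hvS
          · exact hx
      have huT : u ∉ T := fun h =>
        absurd (lt_trans huv (hvleT u h)) (lt_irrefl u)
      have hvT : v ∉ T := fun h => absurd (hvleT v h) (lt_irrefl v)
      have key : ∀ p : Fin m → Prop, ∀ _ : DecidablePred p,
          (S.filter p).card =
            (T.filter p).card + (if p u then 1 else 0) + (if p v then 1 else 0) := by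
        intro p inst
        have hvf : v ∉ T.filter p := fun h => hvT (Finset.mem_of_mem_filter v h)
        have huf2 : u ∉ T.filter p := fun h => huT (Finset.mem_of_mem_filter u h)
        have huf1 : u ∉ insert v (T.filter p) := by
          simp only [Finset.mem_insert]
          rintro (h | h)
          · exact hvu h.symm
          · exact huf2 h
        rw [hSdecomp, Finset.filter_insert, Finset.filter_insert]
        by_cases h1 : p u <;> by_cases h2 : p v <;>
          simp only [h1, h2, if_true, if_false]
        · rw [Finset.card_insert_of_notMem huf1, Finset.card_insert_of_notMem hvf]
        · rw [Finset.card_insert_of_notMem huf2]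
        · rw [Finset.card_insert_of_notMem hvf]
        · rfl
      have k0 := key (fun x => x.val % 2 = 0) (by infer_instance)
      have k1 := key (fun x => x.val % 2 = 1) (by infer_instance)
      rw [k0, k1, ihT]
      split_ifs <;> omega

/-- Every noncrossing partition of `{1,…,2k}` (encoded on `Fin (2k)`, position
`i` carrying label `i+1`) all of whose blocks have even size is balanced: in
each block the number of odd labels equals the number of even labels. -/
theorem noncrossing_even_blocks_balanced {k : ℕ}
    (P : Finset (Finset (Fin (2 * k)))) (hP : IsPartition P)
    (hnc : Noncrossing P) (heven : ∀ B ∈ P, Even B.card) :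
    ∀ B ∈ P, (B.filter (fun x => x.val % 2 = 0)).card
      = (B.filter (fun x => x.val % 2 = 1)).card := by
  intro B hB
  refine alt_parity_balanced B.card B rfl (heven B hB) ?_
  intro u huB v hvB huv hgap
  set I := Finset.Ioo u v with hI
  have hInotB : ∀ x ∈ I, x ∉ B := by
    intro x hx hxB
    rw [hI, Finset.mem_Ioo] at hx
    exact hgap x hxB hx
  have hcontain : ∀ B' ∈ P, (B' ∩ I).Nonempty → B' ⊆ I := by
    rintro B' hB' ⟨x, hx⟩
    rw [Finset.mem_inter] at hx
    obtain ⟨hxB', hxI'⟩ := hx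
    have hxI : u < x ∧ x < v := by rwa [hI, Finset.mem_Ioo] at hxI'
    have hne : B' ≠ B := by
      rintro rfl
      exact hInotB x hxI' hxB'
    intro y hy
    rw [hI, Finset.mem_Ioo]
    by_contra hcon
    push_neg at hcon
    rcases lt_trichotomy y u with h | h | h
    · exact hne (hnc y u x v h hxI.1 hxI.2 B' hB' B hB hy hxB' huB hvB)
    · exact hne (partition_blocks_eq hP hB' hB hy (by rw [h]; exact huB))
    · rcases lt_trichotomy y v with h' | h' | h'
      · exact absurd h' (not_lt.mpr (hcon h))
      · exact hne (partition_blocks_eq hP hB' hB hy (by rw [h']; exact hvB))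
      · exact hne ((hnc u x v y hxI.1 hxI.2 h' B hB B' hB' huB hvB hxB' hy).symm)
  have hIeq : I = (P.filter (fun B' => B' ⊆ I)).biUnion id := by
    ext x
    simp only [Finset.mem_biUnion, Finset.mem_filter, id]
    constructor
    · intro hx
      obtain ⟨C, ⟨hC, hxC⟩, _⟩ := hP.2 x
      exact ⟨C, ⟨hC, hcontain C hC ⟨x, Finset.mem_inter.mpr ⟨hxC, hx⟩⟩⟩, hxC⟩
    · rintro ⟨C, ⟨_, hCI⟩, hxC⟩
      exact hCI hxC
  have hIcard : Even I.card := by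
    rw [hIeq, Finset.card_biUnion]
    · exact Finset.sum_induction _ Even (fun _ _ => Even.add) Even.zero
        (fun C hC => heven C (Finset.mem_filter.mp hC).1)
    · intro C hC D hD hne
      show Disjoint C D
      rw [Finset.disjoint_left]
      intro x hxC hxD
      exact hne (partition_blocks_eq hP (Finset.mem_filter.mp hC).1
        (Finset.mem_filter.mp hD).1 hxC hxD)
  have hIoo : I.card = v.val - u.val - 1 := by
    rw [hI]; exact Fin.card_Ioo u v
  have huvval : u.val < v.val := huv
  rw [Nat.even_iff] at hIcard
  omega
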